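/- Let φ ∈ ℝ/ℤ be badly approximable and let P ⊆ ℝ/ℤ be an arc of length at least 1/2. Then there exist r > 0 and a positive integer d, independent of the starting point, such that for all sufficiently large k and every x₀ ∈ ℝ/ℤ, the number of indices i ∈ {1, 2, …, dk} with x₀ + i·kφ mod 1 ∈ P is at least rk. -/

import Mathlib

lemma my_fract_add (u w : ℝ) :
    Int.fract (u + w) = Int.fract (Int.fract u + Int.fract w) := by
  conv_lhs => rw [show u + w = (Int.fract u + Int.fract w) + ((⌊u⌋ + ⌊w⌋ : ℤ) : ℝ) by
    push_cast [← Int.self_sub_floor]; ring]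
  rw [Int.fract_add_intCast]

lemma my_fract_eval (x : ℝ) (n : ℤ) (h0 : 0 ≤ x - n) (h1 : x - n < 1) :
    Int.fract x = x - n := by
  conv_lhs => rw [show x = (x - n) + (n : ℝ) by ring]
  rw [Int.fract_add_intCast]
  exact Int.fract_eq_self.mpr ⟨h0, h1⟩

lemma my_triple {L u w : ℝ} (hL : 1/2 ≤ L) (hw1 : 1/2 < Int.fract w)
    (hw2 : Int.fract w < 5/8) :
    Int.fract u < L ∨ Int.fract (u + w) < L ∨ Int.fract (u + 2*w) < L := by
  by_contra h
  push_neg at h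
  obtain ⟨h1, h2, h3⟩ := h
  have ht1 : Int.fract u < 1 := Int.fract_lt_one u
  have e1 : Int.fract (u + w) = Int.fract u + Int.fract w - 1 := by
    rw [my_fract_add]
    have := my_fract_eval (Int.fract u + Int.fract w) 1 (by push_cast; linarith)
      (by push_cast; linarith)
    push_cast at this; linarith [this]
  rw [e1] at h2
  have e2 : Int.fract (u + 2*w) = Int.fract u + 2 * Int.fract w - 2 := by
    rw [show u + 2*w = (u + w) + w by ring, my_fract_add, e1]
    have := my_fract_eval (Int.fract u + Int.fract w - 1 + Int.fract w) 1
      (by push_cast; linarith) (by push_cast; linarith)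
    push_cast at this; linarith [this]
  rw [e2] at h3
  linarith



lemma my_walk (β θ : ℝ) (hβ : 0 < β) (hθ : 0 ≤ θ) :
    ∃ T : ℕ, 1 ≤ T ∧ θ < T * β ∧ (T : ℝ) * β ≤ θ + β ∧ (T : ℝ) ≤ θ / β + 1 := by
  refine ⟨⌊θ / β⌋₊ + 1, by omega, ?_, ?_, ?_⟩
  · have h := Nat.lt_floor_add_one (θ / β)
    have h' : θ / β < ((⌊θ / β⌋₊ + 1 : ℕ) : ℝ) := by push_cast; linarith
    calc θ = (θ / β) * β := by field_simp
      _ < _ := mul_lt_mul_of_pos_right h' hβ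
  · have h := Nat.floor_le (show 0 ≤ θ / β by positivity)
    have h' : ((⌊θ / β⌋₊ + 1 : ℕ) : ℝ) ≤ θ / β + 1 := by push_cast; linarith
    calc ((⌊θ / β⌋₊ + 1 : ℕ) : ℝ) * β ≤ (θ / β + 1) * β :=
        mul_le_mul_of_nonneg_right h' hβ.le
      _ = θ + β := by field_simp
  · have h := Nat.floor_le (show 0 ≤ θ / β by positivity)
    push_cast; linarith

set_option maxHeartbeats 800000 in
lemma my_step (φ c : ℝ) (hc : 0 < c)
    (hba : ∀ (p : ℤ) (q : ℕ), 1 ≤ q → c / (q : ℝ) ^ 2 < |φ - (p : ℝ) / q|)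
    (k : ℕ) (hk : 1 ≤ k) :
    ∃ m : ℕ, 1 ≤ m ∧ (m : ℝ) ≤ 32 / c * k + 8 ∧
      1/2 < Int.fract ((m : ℝ) * ((k : ℝ) * φ)) ∧
      Int.fract ((m : ℝ) * ((k : ℝ) * φ)) < 5/8 := by
  obtain ⟨j, q, hq0, hq8, hqj⟩ :=
    Real.exists_int_int_abs_mul_sub_le ((k : ℝ) * φ) (n := 8) (by norm_num)
  set γ : ℝ := (q : ℝ) * ((k : ℝ) * φ) - j with hγdef
  have hγub : |γ| ≤ 1/9 := by
    have h9 : (1 : ℝ) / (((8:ℕ):ℝ) + 1) = 1/9 := by norm_num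
    rw [h9] at hqj; exact hqj
  clear_value γ
  have hqnat : ((q.toNat : ℕ) : ℝ) = (q : ℝ) := by
    exact_mod_cast congrArg (Int.cast : ℤ → ℝ) (Int.toNat_of_nonneg hq0.le)
  have hq1 : 1 ≤ q.toNat := by omega
  have hQ1 : 1 ≤ q.toNat * k := Nat.mul_le_mul hq1 hk
  have hQr : (0:ℝ) < ((q.toNat * k : ℕ) : ℝ) := by exact_mod_cast hQ1
  have hkR : (1:ℝ) ≤ k := by exact_mod_cast hk
  have hq8' : (q.toNat : ℝ) ≤ 8 := by rw [hqnat]; exact_mod_cast hq8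
  have hγeq : γ = ((q.toNat * k : ℕ) : ℝ) * (φ - (j : ℝ) / ((q.toNat * k : ℕ) : ℝ)) := by
    rw [mul_sub, mul_div_cancel₀ _ hQr.ne', hγdef]
    push_cast [hqnat]
    ring
  have hγlb : c / (8 * k) < |γ| := by
    have h1 := hba j _ hQ1
    have h2 : |γ| = ((q.toNat * k : ℕ) : ℝ) * |φ - (j : ℝ) / ((q.toNat * k : ℕ) : ℝ)| := by
      rw [hγeq, abs_mul, abs_of_pos hQr]
    have h3 : c / ((q.toNat * k : ℕ) : ℝ) < |γ| := by
      rw [h2]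
      have hmul := mul_lt_mul_of_pos_left h1 hQr
      calc c / ((q.toNat * k : ℕ) : ℝ)
          = ((q.toNat * k : ℕ) : ℝ) * (c / ((q.toNat * k : ℕ) : ℝ)^2) := by
            field_simp
        _ < _ := hmul
    have hle : ((q.toNat * k : ℕ) : ℝ) ≤ 8 * k := by
      push_cast
      nlinarith
    calc c / (8 * (k:ℝ)) ≤ c / ((q.toNat * k : ℕ) : ℝ) :=
        div_le_div_of_nonneg_left hc.le hQr hle
      _ < |γ| := h3
  have hγ0 : γ ≠ 0 := by
    intro h
    rw [h, abs_zero] at hγlb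
    have : (0:ℝ) < c / (8 * k) := by positivity
    linarith
  -- common facts about q·(kφ)
  have hqkφ : (q.toNat : ℝ) * ((k:ℝ) * φ) = γ + j := by rw [hγdef, hqnat]; ring
  have key : ∀ T : ℕ, ((T * q.toNat : ℕ) : ℝ) * ((k : ℝ) * φ)
      = (T : ℝ) * γ + (((T : ℤ) * j : ℤ) : ℝ) := by
    intro T
    push_cast
    calc (T:ℝ) * (q.toNat:ℝ) * ((k:ℝ)*φ) = (T:ℝ) * ((q.toNat:ℝ) * ((k:ℝ)*φ)) := by ring
      _ = (T:ℝ) * (γ + j) := by rw [hqkφ]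
      _ = (T:ℝ)*γ + (T:ℝ)*(j:ℝ) := by ring
  have hsize : ∀ T : ℕ, (T : ℝ) ≤ (1/2) / |γ| + 1 → ((T * q.toNat : ℕ) : ℝ) ≤ 32 / c * k + 8 := by
    intro T hT
    have hγpos : 0 < |γ| := abs_pos.mpr hγ0
    have h4 : (1/2) / |γ| ≤ 4 * k / c := by
      rw [div_le_div_iff₀ hγpos hc]
      have h8 : c < |γ| * (8 * k) := by
        rw [div_lt_iff₀ (by positivity : (0:ℝ) < 8 * k)] at hγlb
        exact hγlb
      nlinarith
    have hT8 : (0:ℝ) ≤ T := by positivity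
    push_cast
    calc (T:ℝ) * (q.toNat:ℝ) ≤ (T:ℝ) * 8 := mul_le_mul_of_nonneg_left hq8' hT8
      _ ≤ ((1/2) / |γ| + 1) * 8 := by linarith
      _ ≤ (4 * k / c + 1) * 8 := by linarith
      _ = 32 / c * k + 8 := by ring
  rcases hγ0.lt_or_gt with hneg | hpos
  · -- γ < 0 : walk -γ past 3/8
    have hβpos : 0 < -γ := by linarith
    have hβub : -γ ≤ 1/9 := by rw [abs_of_neg hneg] at hγub; linarith
    obtain ⟨T, hT1, hTa, hTb, hTc⟩ := my_walk (-γ) (3/8) hβpos (by norm_num)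
    refine ⟨T * q.toNat, Nat.mul_le_mul hT1 hq1, ?_, ?_, ?_⟩
    · apply hsize T
      rw [abs_of_neg hneg]
      have h38 : (3:ℝ)/8 / (-γ) ≤ (1/2) / (-γ) := by
        have h0 : (0:ℝ) ≤ (1/8)/(-γ) := by positivity
        have he : (3:ℝ)/8/(-γ) + (1/8)/(-γ) = (1/2)/(-γ) := by
          rw [← add_div]; norm_num
        linarith
      linarith
    all_goals {
      have e : Int.fract (((T * q.toNat : ℕ) : ℝ) * ((k : ℝ) * φ)) = 1 - (T:ℝ) * (-γ) := by
        rw [key T, Int.fract_add_intCast]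
        have := my_fract_eval ((T:ℝ) * γ) (-1) (by push_cast; linarith [hTa, hTb, hβub]) (by push_cast; linarith [hTa, hTb, hβub])
        push_cast at this
        linarith [this]
      rw [e]
      linarith }
  · -- γ > 0 : walk γ past 1/2
    have hβub : γ ≤ 1/9 := by rw [abs_of_pos hpos] at hγub; linarith
    obtain ⟨T, hT1, hTa, hTb, hTc⟩ := my_walk γ (1/2) hpos (by norm_num)
    refine ⟨T * q.toNat, Nat.mul_le_mul hT1 hq1, ?_, ?_, ?_⟩
    · apply hsize T
      rw [abs_of_pos hpos]
      exact hTc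
    all_goals {
      have e : Int.fract (((T * q.toNat : ℕ) : ℝ) * ((k : ℝ) * φ)) = (T:ℝ) * γ := by
        rw [key T, Int.fract_add_intCast]
        have := my_fract_eval ((T:ℝ) * γ) 0 (by push_cast; linarith [hTa, hTb, hβub]) (by push_cast; linarith [hTa, hTb, hβub])
        push_cast at this
        linarith [this]
      rw [e]
      linarith }


lemma my_count {p : ℕ → Prop} [DecidablePred p] (k m d : ℕ)
    (hkm : k + 2*m ≤ d * k)
    (htriple : ∀ i, p i ∨ p (i + m) ∨ p (i + 2*m)) :
    k ≤ 3 * ((Finset.Icc 1 (d*k)).filter p).card := by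
  classical
  set f : ℕ → ℕ := fun i => if p i then i else if p (i+m) then i+m else i+2*m with hf
  have hfor : ∀ i, (f i = i ∨ f i = i + m ∨ f i = i + 2*m) ∧ p (f i) := by
    intro i
    by_cases h1 : p i
    · have e : f i = i := by rw [hf]; simp only [if_pos h1]
      exact ⟨Or.inl e, by rw [e]; exact h1⟩
    · by_cases h2 : p (i+m)
      · have e : f i = i + m := by rw [hf]; simp only [if_neg h1, if_pos h2]
        exact ⟨Or.inr (Or.inl e), by rw [e]; exact h2⟩
      · have h3 : p (i + 2*m) := by
          rcases htriple i with h|h|h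
          exacts [absurd h h1, absurd h h2, h]
        have e : f i = i + 2*m := by rw [hf]; simp only [if_neg h1, if_neg h2]
        exact ⟨Or.inr (Or.inr e), by rw [e]; exact h3⟩
  have hmem : ∀ i ∈ Finset.Icc 1 k, f i ∈ (Finset.Icc 1 (d*k)).filter p := by
    intro i hi
    rw [Finset.mem_Icc] at hi
    obtain ⟨hor, hp⟩ := hfor i
    rw [Finset.mem_filter, Finset.mem_Icc]
    refine ⟨⟨?_, ?_⟩, hp⟩ <;> rcases hor with h|h|h <;> omega
  have hfib : ∀ b ∈ (Finset.Icc 1 (d*k)).filter p,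
      ((Finset.Icc 1 k).filter (fun i => f i = b)).card ≤ 3 := by
    intro b _
    have hsub : (Finset.Icc 1 k).filter (fun i => f i = b) ⊆ {b, b - m, b - 2*m} := by
      intro i hi
      rw [Finset.mem_filter] at hi
      obtain ⟨hor, _⟩ := hfor i
      have hib : f i = b := hi.2
      simp only [Finset.mem_insert, Finset.mem_singleton]
      omega
    calc ((Finset.Icc 1 k).filter (fun i => f i = b)).card
        ≤ ({b, b - m, b - 2*m} : Finset ℕ).card := Finset.card_le_card hsub
      _ ≤ 3 := by
          refine le_trans (Finset.card_insert_le _ _) ?_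
          have := Finset.card_insert_le (b - m) ({b - 2*m} : Finset ℕ)
          simp only [Finset.card_singleton] at this ⊢
          omega
  have hkey := Finset.card_le_mul_card_image_of_maps_to hmem 3 hfib
  simpa [Nat.card_Icc] using hkey

/-- Fast ergodicity: for badly approximable `φ` and an arc `P` of length
`L ≥ 1/2` (the arc starting at `a` of length `L`, i.e. points `x` with
`fract (x - a) < L`), there are `r > 0` and `d ∈ ℕ` such that for all
sufficiently large `k` and every starting point `x₀`, the orbit
`x_i = x₀ + i·kφ` visits `P` at least `rk` times among `i ∈ {1,…,dk}`. -/
theorem stmt6 (φ : ℝ)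
    (hba : ∃ c > 0, ∀ (p : ℤ) (q : ℕ), 1 ≤ q → c / (q : ℝ) ^ 2 < |φ - (p : ℝ) / q|)
    (a L : ℝ) (hL : 1/2 ≤ L) (hL1 : L ≤ 1) :
    ∃ r > 0, ∃ d : ℕ, 0 < d ∧ ∃ K : ℕ, ∀ k ≥ K, ∀ x₀ : ℝ,
      r * k ≤ (((Finset.Icc 1 (d * k)).filter
        (fun i : ℕ => Int.fract (x₀ + (i : ℝ) * ((k : ℝ) * φ) - a) < L)).card : ℝ) := by
  obtain ⟨c, hc, hba⟩ := hba
  refine ⟨1/3, by norm_num, ⌈(64:ℝ)/c⌉₊ + 17, by omega, 1, ?_⟩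
  intro k hk x₀
  obtain ⟨m, hm1, hm2, hs1, hs2⟩ := my_step φ c hc hba k hk
  have hkR : (1:ℝ) ≤ k := by exact_mod_cast hk
  have hkm : k + 2*m ≤ (⌈(64:ℝ)/c⌉₊ + 17) * k := by
    rw [← Nat.cast_le (α := ℝ)]
    push_cast
    have hceil : (64:ℝ)/c ≤ (⌈(64:ℝ)/c⌉₊ : ℝ) := Nat.le_ceil _
    have h1 : (64/c) * (k:ℝ) ≤ (⌈(64:ℝ)/c⌉₊:ℝ) * k :=
      mul_le_mul_of_nonneg_right hceil (by positivity)
    have h2 : 2*(m:ℝ) ≤ 64/c * k + 16 := by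
      have : (2:ℝ) * (32/c * k + 8) = 64/c * k + 16 := by ring
      linarith [hm2]
    linarith
  have htriple : ∀ i : ℕ,
      (Int.fract (x₀ + (i:ℝ) * ((k:ℝ)*φ) - a) < L) ∨
      (Int.fract (x₀ + ((i+m : ℕ):ℝ) * ((k:ℝ)*φ) - a) < L) ∨
      (Int.fract (x₀ + ((i+2*m : ℕ):ℝ) * ((k:ℝ)*φ) - a) < L) := by
    intro i
    have h := my_triple (u := x₀ + (i:ℝ)*((k:ℝ)*φ) - a)
      (w := (m:ℝ)*((k:ℝ)*φ)) hL hs1 hs2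
    have e1 : x₀ + ((i+m : ℕ):ℝ)*((k:ℝ)*φ) - a
        = (x₀ + (i:ℝ)*((k:ℝ)*φ) - a) + (m:ℝ)*((k:ℝ)*φ) := by push_cast; ring
    have e2 : x₀ + ((i+2*m : ℕ):ℝ)*((k:ℝ)*φ) - a
        = (x₀ + (i:ℝ)*((k:ℝ)*φ) - a) + 2*((m:ℝ)*((k:ℝ)*φ)) := by push_cast; ring
    rcases h with h|h|h
    · exact Or.inl h
    · exact Or.inr (Or.inl (by rw [e1]; exact h))
    · exact Or.inr (Or.inr (by rw [e2]; exact h))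
  have hcount := my_count (p := fun i : ℕ =>
      Int.fract (x₀ + (i : ℝ) * ((k : ℝ) * φ) - a) < L)
    k m (⌈(64:ℝ)/c⌉₊ + 17) hkm htriple
  have hcast : ((k:ℕ):ℝ) ≤ 3 * (((Finset.Icc 1 ((⌈(64:ℝ)/c⌉₊ + 17) * k)).filter
      (fun i : ℕ => Int.fract (x₀ + (i : ℝ) * ((k : ℝ) * φ) - a) < L)).card : ℝ) := by
    exact_mod_cast hcount
  linarith
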